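/- Let R be a commutative ring, n ≥ 1 an integer, and f, g ∈ R[X] with deg f < 2n−1 and deg g < n. Then the balanced middle product is the sum of a high-short-product part of f mod X^n with g and a low-short-product part of f quo X^n with g; precisely: ((f·g) quo X^{n−1}) mod X^n = ( ((f mod X^n)·g) quo X^{n−1} ) mod X^n + X·( ((f quo X^n)·g) mod X^{n−1} ). -/

import Mathlib

open Polynomial

private lemma aux_div_eq {R : Type*} [CommRing R] {t : ℕ} (p q r : R[X]) (h : p = r + X ^ t * q)
    (hr : r.degree < (X ^ t : R[X]).degree) : p /ₘ X ^ t = q ∧ p %ₘ X ^ t = r :=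
  div_modByMonic_unique q r (monic_X_pow t) ⟨h.symm ▸ rfl, hr⟩

/-- For a commutative ring `R`, `n ≥ 1`, and `f g : R[X]` with
`deg f < 2n−1` and `deg g < n`, the balanced middle product is the sum of a
high-short-product part and a shifted low-short-product part:
`((f·g) quo X^{n−1}) mod X^n
  = (((f mod X^n)·g) quo X^{n−1}) mod X^n + X·(((f quo X^n)·g) mod X^{n−1})`. -/
theorem middle_product_from_short_products
    {R : Type*} [CommRing R] (n : ℕ) (hn : 1 ≤ n)
    (f g : R[X]) (hf : f.degree < ((2 * n - 1 : ℕ) : WithBot ℕ)) (hg : g.degree < n) :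
    ((f * g) /ₘ X ^ (n - 1)) %ₘ X ^ n =
      (((f %ₘ X ^ n) * g) /ₘ X ^ (n - 1)) %ₘ X ^ n
        + X * (((f /ₘ X ^ n) * g) %ₘ X ^ (n - 1)) := by
  nontriviality R
  set f0 := f %ₘ X ^ n with hf0
  set f1 := f /ₘ X ^ n with hf1
  have hsplit : f0 + X ^ n * f1 = f := modByMonic_add_div f (X ^ n)
  -- degree of f1 < n - 1
  have hdf1 : f1.degree < ((n - 1 : ℕ) : WithBot ℕ) := by
    rcases eq_or_ne f1 0 with h0 | h0
    · rw [h0, degree_zero]; exact bot_lt_iff_ne_bot.2 (by simp)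
    · have hle : (X ^ n : R[X]).degree ≤ f.degree := by
        by_contra hlt
        exact h0 ((divByMonic_eq_zero_iff (monic_X_pow n)).2 (not_le.1 hlt))
      have := degree_add_divByMonic (monic_X_pow n) hle
      rw [degree_X_pow] at this
      have h2 : (n : WithBot ℕ) + f1.degree < ((2 * n - 1 : ℕ) : WithBot ℕ) := this ▸ hf
      have : ((2 * n - 1 : ℕ) : WithBot ℕ) = (n : WithBot ℕ) + ((n - 1 : ℕ) : WithBot ℕ) := by
        rw [← Nat.cast_add]; congr 1; omega
      rw [this] at h2
      exact lt_of_add_lt_add_left h2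
  set a := (f0 * g) %ₘ X ^ (n - 1) with ha
  set b := (f0 * g) /ₘ X ^ (n - 1) with hb
  have hab : a + X ^ (n - 1) * b = f0 * g := modByMonic_add_div _ _
  have key : (f * g) /ₘ X ^ (n - 1) = b + X * (f1 * g) := by
    refine (aux_div_eq (f * g) (b + X * (f1 * g)) a ?_ ?_).1
    · rw [← hsplit, add_mul, ← hab, show (X : R[X]) ^ n = X ^ (n-1) * X by
        rw [← pow_succ]; congr 1; omega]
      ring
    · exact degree_modByMonic_lt _ (monic_X_pow _)
  rw [key]
  -- now compute (b + X * (f1 * g)) %ₘ X ^ n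
  set c := (f1 * g) %ₘ X ^ (n - 1) with hc
  set d := (f1 * g) /ₘ X ^ (n - 1) with hd
  have hcd : c + X ^ (n - 1) * d = f1 * g := modByMonic_add_div _ _
  have hdc : c.degree < ((n - 1 : ℕ) : WithBot ℕ) := by
    have := degree_modByMonic_lt (f1 * g) (monic_X_pow (n - 1))
    rwa [degree_X_pow] at this
  refine (aux_div_eq (b + X * (f1 * g)) (b /ₘ X ^ n + d) (b %ₘ X ^ n + X * c) ?_ ?_).2
  · rw [← hcd]
    have h1 : b %ₘ X ^ n + X ^ n * (b /ₘ X ^ n) = b := modByMonic_add_div _ _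
    have h2 : (X : R[X]) * X ^ (n - 1) = X ^ n := by rw [← pow_succ']; congr 1; omega
    calc b + X * (c + X ^ (n-1) * d)
        = (b %ₘ X ^ n + X ^ n * (b /ₘ X ^ n)) + X * c + (X * X ^ (n-1)) * d := by
          rw [h1]; ring
      _ = b %ₘ X ^ n + X * c + X ^ n * (b /ₘ X ^ n + d) := by rw [h2]; ring
  · have h3 : (b %ₘ X ^ n).degree < (X ^ n : R[X]).degree :=
      degree_modByMonic_lt _ (monic_X_pow _)
    have h4 : (X * c).degree < (X ^ n : R[X]).degree := by
      rw [degree_X_pow]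
      have hle : (X * c).degree ≤ 1 + c.degree := by
        refine le_trans (degree_mul_le _ _) ?_
        rw [degree_X]
      refine lt_of_le_of_lt hle ?_
      have h5 : (1 : WithBot ℕ) + c.degree < 1 + ((n-1:ℕ) : WithBot ℕ) :=
        WithBot.add_lt_add_left (by simp) hdc
      calc (1 : WithBot ℕ) + c.degree < 1 + ((n-1:ℕ) : WithBot ℕ) := h5
        _ = ((n : ℕ) : WithBot ℕ) := by
            rw [show (1 : WithBot ℕ) = ((1:ℕ) : WithBot ℕ) from rfl, ← Nat.cast_add]
            congr 1; omega
    exact lt_of_le_of_lt (degree_add_le _ _) (max_lt h3 h4)
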